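/- arXiv:0710.0326 — 4 statements merged into one kernel-verified Lean document; each statement's English description precedes it below -/
import Mathlib

section
/- For m ≥ 2 and n ≥ 2, the orbit of (0,...,0,1) under the action of SL(m, Z_n) on (Z_n)^m is exactly the set of vectors a with gcd(a, n) = 1, i.e., vectors whose components generate the unit ideal of Z_n. -/
open Matrix Finset

section helpers
-- (helpers assumed; re-included at final assembly)

lemma finset_gcd_bezout {ι : Type*} (s : Finset ι) (f : ι → ℕ) :
    ∃ c : ι → ℤ, ∑ i ∈ s, c i * (f i : ℤ) = ((s.gcd f : ℕ) : ℤ) := by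
  classical
  induction s using Finset.cons_induction with
  | empty => exact ⟨0, by simp⟩
  | cons a s ha ih =>
    obtain ⟨c, hc⟩ := ih
    refine ⟨fun i => if i = a then Nat.gcdA (f a) (s.gcd f)
      else Nat.gcdB (f a) (s.gcd f) * c i, ?_⟩
    rw [Finset.sum_cons, Finset.cons_eq_insert, Finset.gcd_insert]
    have h2 : ∑ i ∈ s, (if i = a then Nat.gcdA (f a) (s.gcd f)
        else Nat.gcdB (f a) (s.gcd f) * c i) * (f i : ℤ)
        = Nat.gcdB (f a) (s.gcd f) * ∑ i ∈ s, c i * (f i : ℤ) := by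
      rw [Finset.mul_sum]
      refine Finset.sum_congr rfl fun i hi => ?_
      rw [if_neg (by rintro rfl; exact ha hi)]
      ring
    rw [h2, hc]
    simp only [if_pos rfl]
    have h3 := Nat.gcd_eq_gcd_ab (f a) (s.gcd f)
    have hg : GCDMonoid.gcd (f a) (s.gcd f) = Nat.gcd (f a) (s.gcd f) := rfl
    rw [hg, h3]
    simp only [if_true]
    ring

lemma exists_add_mul_coprime (n x y : ℕ) (hn : n ≠ 0)
    (h : Nat.gcd n (Nat.gcd x y) = 1) :
    ∃ k : ℕ, Nat.gcd n (x + k * y) = 1 := by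
  classical
  refine ⟨∏ p ∈ n.primeFactors.filter (fun p => ¬ p ∣ x), p, ?_⟩
  set k := ∏ p ∈ n.primeFactors.filter (fun p => ¬ p ∣ x), p with hk
  by_contra hg
  obtain ⟨p, pp, hpd⟩ := Nat.exists_prime_and_dvd hg
  have hpn : p ∣ n := hpd.trans (Nat.gcd_dvd_left _ _)
  have hpxy : p ∣ x + k * y := hpd.trans (Nat.gcd_dvd_right _ _)
  by_cases hpx : p ∣ x
  · have hpy : ¬ p ∣ y := by
      intro hpy
      have : p ∣ Nat.gcd n (Nat.gcd x y) := Nat.dvd_gcd hpn (Nat.dvd_gcd hpx hpy)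
      rw [h] at this
      exact pp.one_lt.ne' (Nat.dvd_one.mp this)
    have hpk : ¬ p ∣ k := by
      intro hpk
      obtain ⟨q, hq, hpq⟩ := (pp.prime.dvd_finset_prod_iff _).mp hpk
      obtain ⟨hq1, hq2⟩ := Finset.mem_filter.mp hq
      have hqp : q.Prime := Nat.prime_of_mem_primeFactors hq1
      rw [(Nat.prime_dvd_prime_iff_eq pp hqp).mp hpq] at hpx
      exact hq2 hpx
    have : p ∣ k * y := (Nat.dvd_add_right hpx).mp hpxy
    rcases pp.dvd_mul.mp this with h' | h'
    · exact hpk h'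
    · exact hpy h'
  · have hpk : p ∣ k := Finset.dvd_prod_of_mem _
      (Finset.mem_filter.mpr ⟨Nat.mem_primeFactors.mpr ⟨pp, hpn, hn⟩, hpx⟩)
    exact hpx ((Nat.dvd_add_left (hpk.mul_right y)).mp hpxy)

lemma key_coprime {n : ℕ} [NeZero n] {ι : Type*} [Fintype ι] (a w : ι → ZMod n)
    (h : ∑ j, a j * w j = 1) :
    Nat.gcd n (Finset.univ.gcd fun j => (a j).val) = 1 := by
  set S : ℤ := ∑ j, ((a j).val : ℤ) * ((w j).val : ℤ) with hSdef
  have hS : ((S : ℤ) : ZMod n) = 1 := by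
    rw [hSdef]
    push_cast
    simp only [ZMod.natCast_val, ZMod.cast_id]
    exact h
  have hdvd : (n : ℤ) ∣ S - 1 := by
    rw [← ZMod.intCast_zmod_eq_zero_iff_dvd]
    push_cast
    rw [hS]
    ring
  set g := Nat.gcd n (Finset.univ.gcd fun j => (a j).val) with hgdef
  have hgS : (g : ℤ) ∣ S := by
    refine Finset.dvd_sum fun j _ => Dvd.dvd.mul_right ?_ _
    exact Int.natCast_dvd_natCast.mpr
      ((Nat.gcd_dvd_right _ _).trans (Finset.gcd_dvd (Finset.mem_univ j)))
  have hgn : (g : ℤ) ∣ (n : ℤ) := Int.natCast_dvd_natCast.mpr (Nat.gcd_dvd_left _ _)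
  have : (g : ℤ) ∣ 1 := by
    have := dvd_sub hgS (hgn.trans hdvd)
    simpa using this
  exact Nat.dvd_one.mp (by exact_mod_cast this)

lemma zmod_stable_range {n : ℕ} (hn : 2 ≤ n) (x y c d : ZMod n)
    (h : c * x + d * y = 1) : ∃ k : ZMod n, IsUnit (x + k * y) := by
  haveI : NeZero n := ⟨by omega⟩
  have hsum : ∑ j, (![x, y] j) * (![c, d] j) = 1 := by
    rw [Fin.sum_univ_two]
    simp only [Matrix.cons_val_zero, Matrix.cons_val_one, Matrix.head_cons]
    linear_combination h
  have hg := key_coprime ![x, y] ![c, d] hsum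
  have huniv : (Finset.univ.gcd fun j => ((![x, y] : Fin 2 → ZMod n) j).val)
      = Nat.gcd x.val y.val := by
    rw [show (Finset.univ : Finset (Fin 2)) = {0, 1} from rfl]
    rw [Finset.gcd_insert, Finset.gcd_singleton]
    simp only [Matrix.cons_val_zero, Matrix.cons_val_one, Matrix.head_cons, normalize_eq]
    rfl
  rw [huniv] at hg
  obtain ⟨k, hk⟩ := exists_add_mul_coprime n x.val y.val (by omega) hg
  refine ⟨(k : ZMod n), ?_⟩
  have hcast : ((x.val + k * y.val : ℕ) : ZMod n) = x + (k : ZMod n) * y := by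
    push_cast
    simp [ZMod.natCast_val, ZMod.cast_id]
  rw [← hcast]
  exact (ZMod.isUnit_iff_coprime _ n).mpr (Nat.coprime_comm.mp hk)

end helpers

/-- For m ≥ 2, n ≥ 2, the orbit of (0,…,0,1) under SL(m, Z_n) is exactly the
set of vectors a with gcd(a, n) = 1. -/
theorem orbit_one_eq_coprime (m n : ℕ) (hn : 2 ≤ n) (hm : 2 ≤ m) :
    {a : Fin m → ZMod n |
      ∃ A : Matrix.SpecialLinearGroup (Fin m) (ZMod n),
        vecMul (Pi.single (⟨m - 1, by omega⟩ : Fin m) (1 : ZMod n))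
          (A : Matrix (Fin m) (Fin m) (ZMod n)) = a}
    = {a : Fin m → ZMod n |
        Nat.gcd n (Finset.univ.gcd fun i => (a i).val) = 1} := by
  haveI : NeZero n := ⟨by omega⟩
  have hlt : m - 1 < m := by omega
  set lst : Fin m := ⟨m - 1, hlt⟩ with hlstdef
  have hlstval : (lst : ℕ) = m - 1 := rfl
  ext a
  simp only [Set.mem_setOf_eq]
  constructor
  · rintro ⟨A, rfl⟩
    simp only [Matrix.single_one_vecMul]
    have hA : (A : Matrix (Fin m) (Fin m) (ZMod n)) * adjugate (A : Matrix (Fin m) (Fin m) (ZMod n)) = 1 := by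
      rw [Matrix.mul_adjugate, A.prop, one_smul]
    have hw : ∑ j, (A : Matrix (Fin m) (Fin m) (ZMod n)) lst j
        * adjugate (A : Matrix (Fin m) (Fin m) (ZMod n)) j lst = 1 := by
      have := congrFun (congrFun hA lst) lst
      rwa [Matrix.mul_apply, Matrix.one_apply_eq] at this
    exact key_coprime (fun j => (A : Matrix (Fin m) (Fin m) (ZMod n)) lst j)
      (fun j => adjugate (A : Matrix (Fin m) (Fin m) (ZMod n)) j lst) hw
  · intro ha
    classical
    set v : Fin m → ℕ := fun i => (a i).val with hvdef
    obtain ⟨γ, hγ⟩ := finset_gcd_bezout Finset.univ v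
    have hbez := Nat.gcd_eq_gcd_ab n (Finset.univ.gcd v)
    rw [ha] at hbez
    have hvc : ∀ i, ((v i : ℕ) : ZMod n) = a i := fun i => by
      simp [hvdef, ZMod.natCast_val, ZMod.cast_id]
    -- the gcd as a combination in ZMod n
    have key1 : ((Finset.univ.gcd v : ℕ) : ZMod n) = ∑ i, ((γ i : ℤ) : ZMod n) * a i := by
      have h0 : (((∑ i, γ i * (v i : ℤ)) : ℤ) : ZMod n) = ∑ i, ((γ i : ℤ) : ZMod n) * a i := by
        push_cast
        refine Finset.sum_congr rfl fun i _ => ?_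
        rw [hvc i]
      rw [hγ] at h0
      exact_mod_cast h0
    set B : ZMod n := ((Nat.gcdB n (Finset.univ.gcd v) : ℤ) : ZMod n) with hBdef
    set c : Fin m → ZMod n := fun i => B * ((γ i : ℤ) : ZMod n) with hcdef
    have hone : ∑ i, c i * a i = 1 := by
      have h2 : (1 : ZMod n)
          = ((Finset.univ.gcd v : ℕ) : ZMod n) * B := by
        have h3 := congrArg (fun z : ℤ => (z : ZMod n)) hbez
        push_cast at h3
        simpa [ZMod.natCast_self] using h3
      calc ∑ i, c i * a i = B * ∑ i, ((γ i : ℤ) : ZMod n) * a i := by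
            rw [Finset.mul_sum]
            exact Finset.sum_congr rfl fun i _ => by rw [hcdef]; ring
        _ = B * ((Finset.univ.gcd v : ℕ) : ZMod n) := by rw [key1]
        _ = 1 := by rw [mul_comm]; exact h2.symm
    -- stable range: make last coordinate a unit
    set y : ZMod n := ∑ i ∈ Finset.univ.erase lst, c i * a i with hydef
    have hsplit : c lst * a lst + 1 * y = 1 := by
      rw [one_mul, hydef]
      exact (Finset.add_sum_erase _ (fun i => c i * a i) (Finset.mem_univ lst)).trans hone
    obtain ⟨k, hk⟩ := zmod_stable_range hn (a lst) y (c lst) 1 hsplit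
    set u : (ZMod n)ˣ := hk.unit with hudef
    have huval : (u : ZMod n) = a lst + k * y := hk.unit_spec
    -- matrix T : adds k * (combination) to the lst coordinate
    set T : Matrix (Fin m) (Fin m) (ZMod n) :=
      fun i j => if i = j then 1 else if j = lst then k * c i else 0 with hTdef
    have hdetT : T.det = 1 := by
      have ht : T.BlockTriangular id := by
        intro i j hij
        have hij' : (j : ℕ) < (i : ℕ) := hij
        have h1 : i ≠ j := by rintro rfl; exact absurd hij' (lt_irrefl _)
        have h2 : j ≠ lst := by
          intro hjl
          have := i.isLt
          rw [hjl] at hij'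
          rw [hlstval] at hij'
          omega
        simp [hTdef, h1, h2]
      rw [Matrix.det_of_upperTriangular ht]
      simp [hTdef]
    set b : Fin m → ZMod n := fun j => if j = lst then a lst + k * y else a j with hbdef
    have hb : a ᵥ* T = b := by
      funext j
      show ∑ i, a i * T i j = b j
      by_cases hj : j = lst
      · subst hj
        rw [← Finset.add_sum_erase _ _ (Finset.mem_univ lst)]
        have e1 : a lst * T lst lst = a lst := by simp [hTdef]
        have e2 : ∑ i ∈ Finset.univ.erase lst, a i * T i lst
            = k * ∑ i ∈ Finset.univ.erase lst, c i * a i := by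
          rw [Finset.mul_sum]
          refine Finset.sum_congr rfl fun i hi => ?_
          have hi' : i ≠ lst := Finset.ne_of_mem_erase hi
          have hT2 : T i lst = k * c i := by simp [hTdef, hi']
          rw [hT2]
          ring
        rw [e1, e2, ← hydef]
        simp [hbdef]
      · have : ∀ i, a i * T i j = if i = j then a j else 0 := by
          intro i
          by_cases hij : i = j
          · subst hij; simp [hTdef]
          · simp [hTdef, hij, hj]
        simp only [this]
        rw [Finset.sum_ite_eq' Finset.univ j]
        simp [hbdef, hj]
    have hblst : b lst = (u : ZMod n) := by rw [hbdef]; simp [huval]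
    -- matrix S : clears all coordinates except lst
    set S : Matrix (Fin m) (Fin m) (ZMod n) :=
      fun i j => if i = j then 1 else if i = lst then -((u⁻¹ : (ZMod n)ˣ) * b j) else 0 with hSdef
    have hdetS : S.det = 1 := by
      have hs : S.BlockTriangular OrderDual.toDual := by
        intro i j hij
        have hij' : (i : ℕ) < (j : ℕ) := hij
        have h1 : i ≠ j := by rintro rfl; exact absurd hij' (lt_irrefl _)
        have h2 : i ≠ lst := by
          intro hil
          have := j.isLt
          rw [hil, hlstval] at hij'
          omega
        simp [hSdef, h1, h2]
      rw [Matrix.det_of_lowerTriangular S hs]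
      simp [hSdef]
    have hbS : b ᵥ* S = fun j => if j = lst then (u : ZMod n) else 0 := by
      funext j
      show ∑ i, b i * S i j = _
      by_cases hj : j = lst
      · subst hj
        have : ∀ i, b i * S i lst = if i = lst then b lst else 0 := by
          intro i
          by_cases hil : i = lst
          · subst hil; simp [hSdef]
          · simp [hSdef, hil]
        simp only [this]
        rw [Finset.sum_ite_eq' Finset.univ lst]
        simp [hblst]
      · have : ∀ i, b i * S i j
            = (if i = j then b j else 0) + (if i = lst then -(b lst * ((u⁻¹ : (ZMod n)ˣ) * b j)) else 0) := by
          intro i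
          by_cases hij : i = j
          · subst hij
            simp [hSdef, hj]
          · by_cases hil : i = lst
            · subst hil
              have h1 : S lst j = -((u⁻¹ : (ZMod n)ˣ) * b j) := by
                simp [hSdef, Ne.symm hj]
              rw [h1, if_neg (Ne.symm hj), if_pos rfl, zero_add]
              ring
            · simp [hSdef, hij, hil]
        simp only [this]
        rw [Finset.sum_add_distrib, Finset.sum_ite_eq' Finset.univ j,
          Finset.sum_ite_eq' Finset.univ lst]
        simp only [Finset.mem_univ, if_true]
        rw [hblst, ← mul_assoc, Units.mul_inv, one_mul]
        simp [hj]
    -- diagonal rescaling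
    have h0lt : 0 < m := by omega
    set z0 : Fin m := ⟨0, h0lt⟩ with hz0def
    have hz0lst : z0 ≠ lst := by
      intro h
      have : (0 : ℕ) = m - 1 := congrArg Fin.val h
      omega
    set dg : Fin m → ZMod n :=
      fun i => if i = lst then ((u⁻¹ : (ZMod n)ˣ) : ZMod n) else if i = z0 then (u : ZMod n) else 1
      with hdgdef
    set D : Matrix (Fin m) (Fin m) (ZMod n) := Matrix.diagonal dg with hDdef
    have hdetD : D.det = 1 := by
      rw [hDdef, Matrix.det_diagonal]
      rw [← Finset.mul_prod_erase _ _ (Finset.mem_univ lst)]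
      rw [← Finset.mul_prod_erase _ _ (Finset.mem_erase.mpr ⟨hz0lst, Finset.mem_univ z0⟩)]
      have : ∏ i ∈ (Finset.univ.erase lst).erase z0, dg i = 1 := by
        refine Finset.prod_eq_one fun i hi => ?_
        have h1 : i ≠ z0 := (Finset.mem_erase.mp hi).1
        have h2 : i ≠ lst := (Finset.mem_erase.mp (Finset.mem_erase.mp hi).2).1
        simp [hdgdef, h1, h2]
      rw [this, mul_one]
      simp [hdgdef, hz0lst]
    have hbsD : (fun j => if j = lst then (u : ZMod n) else 0) ᵥ* D = Pi.single lst 1 := by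
      funext j
      rw [hDdef, Matrix.vecMul_diagonal]
      by_cases hj : j = lst
      · subst hj
        simp [hdgdef, Pi.single_eq_same]
      · simp [hdgdef, hj, Pi.single_eq_of_ne hj]
    -- assemble
    set TT : Matrix.SpecialLinearGroup (Fin m) (ZMod n) := ⟨T, hdetT⟩ with hTT
    set SS : Matrix.SpecialLinearGroup (Fin m) (ZMod n) := ⟨S, hdetS⟩ with hSS
    set DD : Matrix.SpecialLinearGroup (Fin m) (ZMod n) := ⟨D, hdetD⟩ with hDD
    set M : Matrix.SpecialLinearGroup (Fin m) (ZMod n) := TT * SS * DD with hM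
    have hMa : a ᵥ* (M : Matrix (Fin m) (Fin m) (ZMod n)) = Pi.single lst 1 := by
      rw [hM, Matrix.SpecialLinearGroup.coe_mul, Matrix.SpecialLinearGroup.coe_mul]
      rw [← Matrix.vecMul_vecMul, ← Matrix.vecMul_vecMul]
      show ((a ᵥ* T) ᵥ* S) ᵥ* D = _
      rw [hb, hbS, hbsD]
    refine ⟨M⁻¹, ?_⟩
    calc Pi.single lst (1 : ZMod n) ᵥ* (↑(M⁻¹) : Matrix (Fin m) (Fin m) (ZMod n))
        = (a ᵥ* (M : Matrix (Fin m) (Fin m) (ZMod n))) ᵥ* (↑(M⁻¹) : Matrix (Fin m) (Fin m) (ZMod n)) := by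
          rw [hMa]
      _ = a ᵥ* ((M : Matrix (Fin m) (Fin m) (ZMod n)) * (↑(M⁻¹) : Matrix (Fin m) (Fin m) (ZMod n))) :=
          Matrix.vecMul_vecMul a _ _
      _ = a := by
          rw [← Matrix.SpecialLinearGroup.coe_mul, mul_inv_cancel,
            Matrix.SpecialLinearGroup.coe_one, Matrix.vecMul_one]
end

section
/- For p prime, k ≥ 1, m ≥ 2, and 0 ≤ j ≤ k, the set {a ∈ (Z_{p^k})^m : gcd(a, p^k) = p^j} is exactly one orbit of the SL(m, Z_{p^k})-action, namely the orbit of (0,...,0,p^j). -/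
open Matrix Finset

private lemma zmod_val_pow_mul {p k j : ℕ} (hp : p.Prime) (x : ZMod (p ^ k)) :
    (((p ^ j : ℕ) : ZMod (p ^ k)) * x).val = (p ^ j * x.val) % p ^ k := by
  haveI : NeZero (p ^ k) := ⟨pow_ne_zero k hp.ne_zero⟩
  conv_lhs => rw [show ((p ^ j : ℕ) : ZMod (p ^ k)) * x
      = ((p ^ j * x.val : ℕ) : ZMod (p ^ k)) by
    push_cast
    rw [ZMod.natCast_val, ZMod.cast_id]]
  rw [ZMod.val_natCast]

/-- If some entry of `r` has value not divisible by `p`, then the gcd computation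
for `p^j • r` gives `p^j`. -/
private lemma gcd_eq_pow {p k j m : ℕ} (hp : p.Prime) (hj : j ≤ k)
    (r : Fin m → ZMod (p ^ k)) (i0 : Fin m) (h0 : ¬ p ∣ (r i0).val) :
    Nat.gcd (p ^ k)
      (Finset.univ.gcd fun i => (((p ^ j : ℕ) : ZMod (p ^ k)) * r i).val) = p ^ j := by
  have hdvd : ∀ i, p ^ j ∣ (((p ^ j : ℕ) : ZMod (p ^ k)) * r i).val := by
    intro i
    rw [zmod_val_pow_mul hp]
    exact (Nat.dvd_mod_iff (pow_dvd_pow p hj)).mpr (dvd_mul_right _ _)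
  apply Nat.dvd_antisymm
  · obtain ⟨t, htk, ht⟩ := (Nat.dvd_prime_pow hp).mp
      (Nat.gcd_dvd_left (p ^ k) (Finset.univ.gcd fun i => (((p ^ j : ℕ) : ZMod (p ^ k)) * r i).val))
    rw [ht]
    apply pow_dvd_pow
    by_contra hjt
    have hjt' : j + 1 ≤ t := by omega
    have hjk : j + 1 ≤ k := by omega
    have h1 : p ^ (j + 1) ∣ (((p ^ j : ℕ) : ZMod (p ^ k)) * r i0).val := by
      have s1 : p ^ (j + 1) ∣ Finset.univ.gcd fun i => (((p ^ j : ℕ) : ZMod (p ^ k)) * r i).val :=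
        dvd_trans (pow_dvd_pow p hjt') (ht ▸ Nat.gcd_dvd_right _ _)
      exact dvd_trans s1 (Finset.gcd_dvd (Finset.mem_univ i0))
    rw [zmod_val_pow_mul hp, Nat.dvd_mod_iff (pow_dvd_pow p hjk), pow_succ] at h1
    exact h0 ((Nat.mul_dvd_mul_iff_left (pow_pos hp.pos j)).mp h1)
  · exact Nat.dvd_gcd (pow_dvd_pow p hj)
      (Finset.dvd_gcd fun i _ => hdvd i)

/-- Every row of an `SL` matrix over `ZMod (p ^ k)` has an entry with value
not divisible by `p`. -/
private lemma sl_row_exists_unit {p k m : ℕ} (hp : p.Prime) (hk : 1 ≤ k)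
    (A : Matrix.SpecialLinearGroup (Fin m) (ZMod (p ^ k))) (r : Fin m) :
    ∃ i, ¬ p ∣ ((A : Matrix (Fin m) (Fin m) (ZMod (p ^ k))) r i).val := by
  by_contra h
  push_neg at h
  have h1 : (A : Matrix (Fin m) (Fin m) (ZMod (p ^ k)))
      * (A : Matrix (Fin m) (Fin m) (ZMod (p ^ k))).adjugate = 1 := by
    rw [Matrix.mul_adjugate, A.2, one_smul]
  have h2 : ∑ s, (A : Matrix (Fin m) (Fin m) (ZMod (p ^ k))) r s
      * (A : Matrix (Fin m) (Fin m) (ZMod (p ^ k))).adjugate s r = 1 := by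
    have := congrFun (congrFun h1 r) r
    simpa [Matrix.mul_apply, Matrix.one_apply] using this
  have hd : p ∣ p ^ k := dvd_pow_self p (by omega)
  haveI : NeZero (p ^ k) := ⟨pow_ne_zero k hp.ne_zero⟩
  haveI : Fact p.Prime := ⟨hp⟩
  have h3 := congrArg (ZMod.castHom hd (ZMod p)) h2
  rw [map_sum, _root_.map_one] at h3
  have h4 : ∀ s ∈ Finset.univ, (ZMod.castHom hd (ZMod p))
      ((A : Matrix (Fin m) (Fin m) (ZMod (p ^ k))) r s
        * (A : Matrix (Fin m) (Fin m) (ZMod (p ^ k))).adjugate s r) = 0 := by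
    intro s _
    rw [_root_.map_mul]
    have : (ZMod.castHom hd (ZMod p)) ((A : Matrix (Fin m) (Fin m) (ZMod (p ^ k))) r s) = 0 := by
      rw [ZMod.castHom_apply, ZMod.cast_eq_val, ZMod.natCast_eq_zero_iff]
      exact h s
    rw [this, zero_mul]
  rw [Finset.sum_congr rfl h4, Finset.sum_const, smul_zero] at h3
  exact one_ne_zero h3.symm

/-- A vector with a unit entry can be completed to an `SL` matrix as the last row. -/
private lemma exists_SL_row {R : Type*} [CommRing R] {m : ℕ} (hm : 2 ≤ m)
    (b : Fin m → R) (i0 : Fin m) (hu : IsUnit (b i0)) :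
    ∃ A : Matrix.SpecialLinearGroup (Fin m) R,
      (A : Matrix (Fin m) (Fin m) R) ⟨m - 1, by omega⟩ = b := by
  obtain ⟨u, hu⟩ := hu
  set last : Fin m := ⟨m - 1, by omega⟩ with hlast
  set z : Fin m := ⟨0, by omega⟩ with hz
  have hzl : z ≠ last := by
    intro h
    have h' : (0 : ℕ) = m - 1 := congrArg Fin.val h
    omega
  set σ := Equiv.swap i0 last with hσ
  set ε : R := if i0 = last then 1 else -1 with hε
  set M : Matrix (Fin m) (Fin m) R := fun r c =>
    if r = last then b (σ c) else if c = r then (if r = z then ε * ↑u⁻¹ else 1) else 0 with hM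
  have hle : ∀ i : Fin m, i ≤ last := by
    intro i
    have := i.isLt
    simp only [hlast, Fin.le_def]
    omega
  have htri : M.BlockTriangular OrderDual.toDual := by
    intro i j hij
    have hij' : i < j := hij
    have hi : i ≠ last := by
      intro h
      exact absurd (lt_of_lt_of_le hij' (hle j)) (by simp [h])
    simp [hM, hi, hij'.ne']
  have hdiag : ∀ i, M i i = if i = last then (↑u : R) else if i = z then ε * ↑u⁻¹ else 1 := by
    intro i
    by_cases h : i = last
    · subst h
      simp [hM, hσ, Equiv.swap_apply_right, hu]
    · simp [hM, h]
  have hdet : M.det = ε := by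
    rw [Matrix.det_of_lowerTriangular M htri]
    rw [Finset.prod_congr rfl fun i _ => hdiag i]
    rw [← Finset.mul_prod_erase Finset.univ _ (Finset.mem_univ last)]
    rw [if_pos rfl]
    have : ∀ i ∈ Finset.univ.erase last,
        (if i = last then (↑u : R) else if i = z then ε * ↑u⁻¹ else 1)
          = if i = z then ε * ↑u⁻¹ else 1 := by
      intro i hi
      rw [if_neg (Finset.mem_erase.mp hi).1]
    rw [Finset.prod_congr rfl this, Finset.prod_ite_eq' (Finset.univ.erase last) z
      (fun _ => ε * ↑u⁻¹)]
    rw [if_pos (Finset.mem_erase.mpr ⟨hzl, Finset.mem_univ z⟩)]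
    rw [mul_comm ε, ← mul_assoc, Units.mul_inv, one_mul]
  refine ⟨⟨M * σ.permMatrix R, ?_⟩, ?_⟩
  · rw [Matrix.det_mul, hdet, Matrix.det_permutation]
    by_cases h : i0 = last
    · rw [hε, if_pos h, hσ, h, Equiv.swap_self]
      simp
    · rw [hε, if_neg h, hσ, Equiv.Perm.sign_swap h]
      simp
  · funext c
    show (M * σ.permMatrix R) last c = b c
    rw [PEquiv.mul_toMatrix_toPEquiv]
    show M last (σ.symm c) = b c
    simp [hM, Equiv.apply_symm_apply]

/-- For p prime, k ≥ 1, m ≥ 2, 0 ≤ j ≤ k, the set of a ∈ (Z_{p^k})^m with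
gcd(a, p^k) = p^j is exactly the SL(m, Z_{p^k})-orbit of (0,…,0,p^j). -/
theorem orbit_prime_power (m p k j : ℕ) (hp : p.Prime) (hk : 1 ≤ k)
    (hm : 2 ≤ m) (hj : j ≤ k) :
    {a : Fin m → ZMod (p ^ k) |
        Nat.gcd (p ^ k) (Finset.univ.gcd fun i => (a i).val) = p ^ j}
      = {a : Fin m → ZMod (p ^ k) |
          ∃ A : Matrix.SpecialLinearGroup (Fin m) (ZMod (p ^ k)),
            vecMul (Pi.single (⟨m - 1, by omega⟩ : Fin m)
                ((p : ZMod (p ^ k)) ^ j))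
              (A : Matrix (Fin m) (Fin m) (ZMod (p ^ k))) = a} := by
  haveI : NeZero (p ^ k) := ⟨pow_ne_zero k hp.ne_zero⟩
  have hpj : ((p : ZMod (p ^ k)) ^ j) = ((p ^ j : ℕ) : ZMod (p ^ k)) := by push_cast; ring
  ext a
  simp only [Set.mem_setOf_eq]
  constructor
  · intro ha
    -- a_i = p^j * b_i with b_{i0} a unit
    have hGdvd : ∀ i, p ^ j ∣ (a i).val := by
      intro i
      calc p ^ j = Nat.gcd (p ^ k) (Finset.univ.gcd fun i => (a i).val) := ha.symm
        _ ∣ Finset.univ.gcd fun i => (a i).val := Nat.gcd_dvd_right _ _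
        _ ∣ (a i).val := Finset.gcd_dvd (Finset.mem_univ i)
    set b : Fin m → ZMod (p ^ k) := fun i => (((a i).val / p ^ j : ℕ) : ZMod (p ^ k)) with hb
    have hab : ∀ i, ((p ^ j : ℕ) : ZMod (p ^ k)) * b i = a i := by
      intro i
      rw [hb, ← Nat.cast_mul, Nat.mul_div_cancel' (hGdvd i), ZMod.natCast_val, ZMod.cast_id]
    by_cases hcase : j = k
    · -- then a = 0 and A = 1 works
      have ha0 : a = 0 := by
        funext i
        have : ((p ^ j : ℕ) : ZMod (p ^ k)) = 0 := by
          rw [hcase, ZMod.natCast_self]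
        rw [← hab i, this, zero_mul, Pi.zero_apply]
      refine ⟨1, ?_⟩
      rw [ha0]
      funext c
      rw [Matrix.SpecialLinearGroup.coe_one, Matrix.vecMul_one]
      rw [hpj, hcase, ZMod.natCast_self]
      simp [Pi.single_apply]
    · -- some entry not divisible by p^{j+1}
      have hjk : j + 1 ≤ k := by omega
      have hex : ∃ i0, ¬ p ^ (j + 1) ∣ (a i0).val := by
        by_contra hall
        push_neg at hall
        have : p ^ (j + 1) ∣ p ^ j := by
          rw [← ha]
          exact Nat.dvd_gcd (pow_dvd_pow p hjk) (Finset.dvd_gcd fun i _ => hall i)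
        have := (Nat.pow_dvd_pow_iff_le_right hp.one_lt).mp this
        omega
      obtain ⟨i0, hi0⟩ := hex
      have hbu : IsUnit (b i0) := by
        rw [hb]
        rw [ZMod.isUnit_iff_coprime]
        apply Nat.Coprime.pow_right
        rw [Nat.coprime_comm, hp.coprime_iff_not_dvd]
        intro hdvd
        apply hi0
        obtain ⟨c, hc⟩ := hdvd
        obtain ⟨d, hd⟩ := hGdvd i0
        rw [hd, Nat.mul_div_cancel_left _ (pow_pos hp.pos j)] at hc
        rw [hd, hc, pow_succ]
        ring_nf
        exact Dvd.intro c (by ring)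
      obtain ⟨A, hA⟩ := exists_SL_row hm b i0 hbu
      refine ⟨A, ?_⟩
      funext c
      rw [Matrix.single_vecMul]
      show (p : ZMod (p ^ k)) ^ j * (A : Matrix (Fin m) (Fin m) (ZMod (p ^ k))) _ c = a c
      rw [hA, hpj, hab]
  · rintro ⟨A, rfl⟩
    obtain ⟨i0, hi0⟩ := sl_row_exists_unit hp hk A ⟨m - 1, by omega⟩
    have : (vecMul (Pi.single (⟨m - 1, by omega⟩ : Fin m) ((p : ZMod (p ^ k)) ^ j))
        (A : Matrix (Fin m) (Fin m) (ZMod (p ^ k))))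
        = fun c => ((p ^ j : ℕ) : ZMod (p ^ k))
            * (A : Matrix (Fin m) (Fin m) (ZMod (p ^ k))) ⟨m - 1, by omega⟩ c := by
      rw [Matrix.single_vecMul, hpj]
      rfl
    rw [this]
    exact gcd_eq_pow hp hj (fun c => (A : Matrix (Fin m) (Fin m) (ZMod (p ^ k))) ⟨m - 1, by omega⟩ c) i0 hi0
end

section
/- For p prime, k ≥ 1, m ≥ 2, the SL(m, Z_{p^k})-action on (Z_{p^k})^m has exactly k+1 orbits. -/
open Matrix

set_option linter.unusedSectionVars false

section Aux

variable {p k m : ℕ} [Fact p.Prime] [NeZero (p ^ k)]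

/-- Valuation on `ZMod (p^k)`: `k` for `0`, else `padicValNat` of the value. -/
def nuZ (p k : ℕ) (x : ZMod (p ^ k)) : ℕ :=
  if x = 0 then k else padicValNat p x.val

lemma nuZ_zero : nuZ p k (0 : ZMod (p ^ k)) = k := by simp [nuZ]

lemma nuZ_lt {x : ZMod (p ^ k)} (hx : x ≠ 0) : nuZ p k x < k := by
  rw [nuZ, if_neg hx]
  have hv : x.val ≠ 0 := fun h => hx ((ZMod.val_eq_zero x).1 h)
  have hd : p ^ padicValNat p x.val ∣ x.val := pow_padicValNat_dvd
  have h1 : p ^ padicValNat p x.val ≤ x.val := Nat.le_of_dvd (Nat.pos_of_ne_zero hv) hd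
  have h2 : x.val < p ^ k := ZMod.val_lt x
  exact (Nat.pow_lt_pow_iff_right (Fact.out : p.Prime).one_lt).1 (lt_of_le_of_lt h1 h2)

lemma nuZ_le (x : ZMod (p ^ k)) : nuZ p k x ≤ k := by
  by_cases hx : x = 0
  · simp [hx, nuZ_zero]
  · exact (nuZ_lt hx).le

lemma natdvd_of_le_nuZ {x : ZMod (p ^ k)} {j : ℕ} (h : j ≤ nuZ p k x) :
    p ^ j ∣ x.val := by
  by_cases hx : x = 0
  · simp [hx]
  · have hv : x.val ≠ 0 := fun h' => hx ((ZMod.val_eq_zero x).1 h')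
    rw [nuZ, if_neg hx] at h
    exact (padicValNat_dvd_iff_le hv).2 h

lemma dvd_of_le_nuZ {x : ZMod (p ^ k)} {j : ℕ} (h : j ≤ nuZ p k x) :
    (p : ZMod (p ^ k)) ^ j ∣ x := by
  have hd : p ^ j ∣ x.val := natdvd_of_le_nuZ h
  have := Nat.cast_dvd_cast (α := ZMod (p ^ k)) hd
  simpa [ZMod.natCast_val, ZMod.cast_id] using this

lemma le_nuZ_of_dvd {x : ZMod (p ^ k)} {j : ℕ} (hj : j ≤ k)
    (h : (p : ZMod (p ^ k)) ^ j ∣ x) : j ≤ nuZ p k x := by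
  by_cases hx : x = 0
  · simpa [hx, nuZ_zero] using hj
  · obtain ⟨y, hy⟩ := h
    have hv : x.val ≠ 0 := fun h' => hx ((ZMod.val_eq_zero x).1 h')
    have hxc : x = ((p ^ j * y.val : ℕ) : ZMod (p ^ k)) := by
      push_cast
      simpa [ZMod.natCast_val, ZMod.cast_id] using hy
    have hval : x.val = (p ^ j * y.val) % p ^ k := by
      rw [hxc, ZMod.val_natCast]
    have hdvd : p ^ j ∣ x.val := by
      rw [hval]
      exact (Nat.dvd_mod_iff (pow_dvd_pow p hj)).2 (dvd_mul_right _ _)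
    rw [nuZ, if_neg hx]
    exact (padicValNat_dvd_iff_le hv).1 hdvd

lemma nuZ_pow {j : ℕ} (hj : j ≤ k) : nuZ p k ((p : ZMod (p ^ k)) ^ j) = j := by
  rcases eq_or_lt_of_le hj with hjk | hjk
  · have h0 : ((p : ZMod (p ^ k)) ^ j) = 0 := by
      rw [hjk]
      have := ZMod.natCast_self (p ^ k)
      push_cast at this
      exact this
    rw [h0, nuZ_zero, hjk]
  · have hne : ((p : ZMod (p ^ k)) ^ j) ≠ 0 := by
      intro h0
      have h0' : ((p ^ j : ℕ) : ZMod (p ^ k)) = 0 := by push_cast; exact h0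
      have hdvd := (ZMod.natCast_eq_zero_iff _ _).1 h0'
      have := Nat.le_of_dvd (pow_pos (Fact.out : p.Prime).pos _) hdvd
      exact absurd ((Nat.pow_le_pow_iff_right (Fact.out : p.Prime).one_lt).1 this) (by omega)
    have hval : ((p : ZMod (p ^ k)) ^ j).val = p ^ j := by
      have h1 : ((p : ZMod (p ^ k)) ^ j) = ((p ^ j : ℕ) : ZMod (p ^ k)) := by push_cast; rfl
      rw [h1, ZMod.val_natCast,
        Nat.mod_eq_of_lt (Nat.pow_lt_pow_right (Fact.out : p.Prime).one_lt hjk)]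
    rw [nuZ, if_neg hne, hval, padicValNat.prime_pow]

lemma isUnit_val_div_pow {x : ZMod (p ^ k)} (hx : nuZ p k x < k) :
    IsUnit ((x.val / p ^ nuZ p k x : ℕ) : ZMod (p ^ k)) := by
  have hx0 : x ≠ 0 := by rintro rfl; simp [nuZ_zero] at hx
  have hv : x.val ≠ 0 := fun h' => hx0 ((ZMod.val_eq_zero x).1 h')
  have hjval : nuZ p k x = padicValNat p x.val := by rw [nuZ, if_neg hx0]
  rw [ZMod.isUnit_iff_coprime]
  apply Nat.Coprime.pow_right
  rw [Nat.coprime_comm, (Fact.out : p.Prime).coprime_iff_not_dvd]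
  intro hdvd
  have hd : p ^ nuZ p k x ∣ x.val := natdvd_of_le_nuZ le_rfl
  have h2 : p ^ nuZ p k x * p ∣ x.val := (Nat.dvd_div_iff_mul_dvd hd).1 hdvd
  rw [← pow_succ, hjval] at h2
  exact pow_succ_padicValNat_not_dvd hv h2

/-- The orbit relation. -/
def SLRel (m p k : ℕ) (a b : Fin m → ZMod (p ^ k)) : Prop :=
  ∃ A : Matrix.SpecialLinearGroup (Fin m) (ZMod (p ^ k)),
    vecMul a (A : Matrix (Fin m) (Fin m) (ZMod (p ^ k))) = b

lemma SLRel.trans {a b c : Fin m → ZMod (p ^ k)} (h1 : SLRel m p k a b)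
    (h2 : SLRel m p k b c) : SLRel m p k a c := by
  obtain ⟨A, hA⟩ := h1
  obtain ⟨B, hB⟩ := h2
  exact ⟨A * B, by rw [Matrix.SpecialLinearGroup.coe_mul, ← vecMul_vecMul, hA, hB]⟩

lemma vecMul_transvection {R : Type} [CommRing R] (c : Fin m → R) (i₀ j : Fin m) (t : R) :
    vecMul c (Matrix.transvection i₀ j t) = c + Pi.single j (c i₀ * t) := by
  funext l
  simp only [Matrix.transvection, vecMul, dotProduct, Matrix.add_apply, Matrix.one_apply,
    Matrix.single, Matrix.of_apply, Pi.add_apply, Pi.single_apply, mul_add]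
  rw [Finset.sum_add_distrib]
  congr 1
  · simp [mul_ite, Finset.sum_ite_eq', eq_comm]
  · simp only [mul_ite, mul_zero, ite_and]
    rw [Finset.sum_ite_eq (Finset.univ) i₀ (fun x => if j = l then c x * t else 0)]
    simp [eq_comm]

lemma rel_update {c : Fin m → ZMod (p ^ k)} {i₀ j : Fin m} (hu : IsUnit (c i₀))
    (hij : j ≠ i₀) (x : ZMod (p ^ k)) : SLRel m p k c (Function.update c j x) := by
  set t : ZMod (p ^ k) := ((hu.unit⁻¹ : (ZMod (p ^ k))ˣ) : ZMod (p ^ k)) * (x - c j) with ht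
  refine ⟨⟨Matrix.transvection i₀ j t, Matrix.det_transvection_of_ne i₀ j (Ne.symm hij) t⟩, ?_⟩
  show vecMul c (Matrix.transvection i₀ j t) = _
  rw [vecMul_transvection]
  funext l
  rcases eq_or_ne l j with rfl | hl
  · have : c i₀ * t = x - c l := by
      rw [ht, ← mul_assoc, hu.mul_val_inv, one_mul]
    simp [this, Function.update_self]
  · simp [Function.update_of_ne hl, Pi.single_apply, Ne.symm hl]

lemma rel_pivot [NeZero m] {c : Fin m → ZMod (p ^ k)} (hc : c 0 = 1) :
    SLRel m p k c (Pi.single 0 1) := by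
  set e : Fin m → ZMod (p ^ k) := Pi.single 0 1 with he
  set w : Fin m → ZMod (p ^ k) := fun j => e j - c j with hw
  have hdet : (1 + replicateCol (Fin 1) e * replicateRow (Fin 1) w).det = 1 := by
    erw [Matrix.det_one_add_replicateCol_mul_replicateRow (ι := Fin 1) e w]
    simp [hw, he, dotProduct, Pi.single_apply, hc]
  refine ⟨⟨_, hdet⟩, ?_⟩
  funext l
  show (vecMul c (1 + replicateCol (Fin 1) e * replicateRow (Fin 1) w)) l = e l
  rw [vecMul_add, vecMul_one]
  have key : (c ᵥ* (replicateCol (Fin 1) e * replicateRow (Fin 1) w)) l = w l := by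
    simp only [vecMul, dotProduct, Matrix.mul_apply, replicateCol, replicateRow, Matrix.of_apply]
    simp only [Finset.sum_const, Finset.card_univ, Fintype.card_fin, one_smul]
    rw [show (∑ i, c i * (e i * w l)) = (∑ i, c i * e i) * w l by
      rw [Finset.sum_mul]; congr 1; funext; ring]
    have h1 : (∑ i, c i * e i) = 1 := by simp [he, Pi.single_apply, hc]
    rw [h1, one_mul]
  rw [Pi.add_apply, key]
  simp [hw]

lemma rel_unit_to_single [NeZero m] (hm : 2 ≤ m) {c : Fin m → ZMod (p ^ k)} {i₀ : Fin m}
    (hu : IsUnit (c i₀)) : SLRel m p k c (Pi.single 0 1) := by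
  by_cases h0 : i₀ = (0 : Fin m)
  · set i₁ : Fin m := ⟨1, by omega⟩ with hi₁
    have h10 : i₁ ≠ 0 := by simp [hi₁, Fin.ext_iff]
    have step1 : SLRel m p k c (Function.update c i₁ 1) :=
      rel_update hu (h0 ▸ h10) 1
    have hu1 : IsUnit ((Function.update c i₁ 1) i₁) := by
      rw [Function.update_self]; exact isUnit_one
    have step2 : SLRel m p k (Function.update c i₁ 1)
        (Function.update (Function.update c i₁ 1) 0 1) :=
      rel_update hu1 (Ne.symm h10) 1
    have step3 : SLRel m p k (Function.update (Function.update c i₁ 1) 0 1)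
        (Pi.single 0 1) := rel_pivot (Function.update_self _ _ _)
    exact (step1.trans step2).trans step3
  · have step1 : SLRel m p k c (Function.update c 0 1) :=
      rel_update hu (Ne.symm h0) 1
    have step2 : SLRel m p k (Function.update c 0 1) (Pi.single 0 1) :=
      rel_pivot (Function.update_self _ _ _)
    exact step1.trans step2

/-- minimal valuation of the entries of a vector -/
def wv [NeZero m] (a : Fin m → ZMod (p ^ k)) : ℕ :=
  Finset.univ.inf' Finset.univ_nonempty fun i => nuZ p k (a i)

lemma wv_le [NeZero m] (a : Fin m → ZMod (p ^ k)) : wv a ≤ k := by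
  obtain ⟨i⟩ := (inferInstance : Nonempty (Fin m))
  exact le_trans (Finset.inf'_le _ (Finset.mem_univ i)) (nuZ_le _)

lemma wv_le_nuZ [NeZero m] (a : Fin m → ZMod (p ^ k)) (i : Fin m) :
    wv a ≤ nuZ p k (a i) := Finset.inf'_le _ (Finset.mem_univ i)

lemma wv_le_vecMul [NeZero m] (a : Fin m → ZMod (p ^ k))
    (A : Matrix (Fin m) (Fin m) (ZMod (p ^ k))) : wv a ≤ wv (vecMul a A) := by
  apply Finset.le_inf'
  intro i' _
  apply le_nuZ_of_dvd (wv_le a)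
  have : vecMul a A i' = ∑ i, a i * A i i' := by simp [vecMul, dotProduct]
  rw [this]
  exact Finset.dvd_sum fun i _ => (dvd_of_le_nuZ (wv_le_nuZ a i)).mul_right _

lemma wv_eq_of_rel [NeZero m] {a b : Fin m → ZMod (p ^ k)} (h : SLRel m p k a b) :
    wv a = wv b := by
  obtain ⟨A, hA⟩ := h
  refine le_antisymm (hA ▸ wv_le_vecMul a _) ?_
  have hb : vecMul b ((A⁻¹ : Matrix.SpecialLinearGroup (Fin m) (ZMod (p ^ k))) :
      Matrix (Fin m) (Fin m) (ZMod (p ^ k))) = a := by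
    rw [← hA, vecMul_vecMul, ← Matrix.SpecialLinearGroup.coe_mul, mul_inv_cancel,
      Matrix.SpecialLinearGroup.coe_one, vecMul_one]
  exact hb ▸ wv_le_vecMul b _

lemma wv_pow_single [NeZero m] {j : ℕ} (hj : j ≤ k) :
    wv ((p : ZMod (p ^ k)) ^ j • (Pi.single 0 1 : Fin m → ZMod (p ^ k))) = j := by
  have hentry : ∀ i : Fin m, ((p : ZMod (p ^ k)) ^ j • (Pi.single 0 1 : Fin m → ZMod (p ^ k))) i
      = if i = 0 then (p : ZMod (p ^ k)) ^ j else 0 := by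
    intro i
    rcases eq_or_ne i 0 with rfl | hi
    · simp
    · simp [Pi.single_apply, hi]
  apply le_antisymm
  · refine le_trans (wv_le_nuZ _ 0) ?_
    rw [hentry 0, if_pos rfl, nuZ_pow hj]
  · apply Finset.le_inf'
    intro i _
    rw [hentry i]
    rcases eq_or_ne i 0 with rfl | hi
    · rw [if_pos rfl, nuZ_pow hj]
    · rw [if_neg hi, nuZ_zero]; exact hj

lemma rel_norm [NeZero m] (hm : 2 ≤ m) (a : Fin m → ZMod (p ^ k)) :
    SLRel m p k a ((p : ZMod (p ^ k)) ^ wv a • (Pi.single 0 1 : Fin m → ZMod (p ^ k))) := by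
  set j := wv a with hjdef
  by_cases hjk : j = k
  · have hall : ∀ i, a i = 0 := by
      intro i
      by_contra h
      have h1 := nuZ_lt h
      have h2 := wv_le_nuZ a i
      omega
    have hp0 : (p : ZMod (p ^ k)) ^ j = 0 := by
      rw [hjk]
      have := ZMod.natCast_self (p ^ k)
      push_cast at this
      exact this
    have ha : a = (p : ZMod (p ^ k)) ^ j • (Pi.single 0 1 : Fin m → ZMod (p ^ k)) := by
      rw [hp0, zero_smul]; funext i; exact hall i
    exact ha ▸ ⟨1, by simp⟩
  · have hjk' : j < k := lt_of_le_of_ne (wv_le a) hjk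
    obtain ⟨i₀, -, hi₀⟩ := Finset.exists_mem_eq_inf' (Finset.univ_nonempty)
      (fun i => nuZ p k (a i))
    set c : Fin m → ZMod (p ^ k) := fun i => (((a i).val / p ^ j : ℕ) : ZMod (p ^ k)) with hcdef
    have hc : ∀ i, a i = (p : ZMod (p ^ k)) ^ j * c i := by
      intro i
      have hd : p ^ j ∣ (a i).val := natdvd_of_le_nuZ (wv_le_nuZ a i)
      have h1 : ((p ^ j * ((a i).val / p ^ j) : ℕ) : ZMod (p ^ k)) = a i := by
        rw [Nat.mul_div_cancel' hd]
        simp [ZMod.natCast_val, ZMod.cast_id]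
      rw [← h1, hcdef]
      push_cast
      rfl
    have hnui₀ : nuZ p k (a i₀) = j := hi₀.symm
    have hcu : IsUnit (c i₀) := by
      have := isUnit_val_div_pow (x := a i₀) (by rw [hnui₀]; exact hjk')
      rwa [hnui₀] at this
    obtain ⟨A, hA⟩ := rel_unit_to_single hm hcu
    refine ⟨A, ?_⟩
    have ha : a = (p : ZMod (p ^ k)) ^ j • c := funext fun i => by
      rw [Pi.smul_apply, smul_eq_mul, hc]
    rw [ha, smul_vecMul, hA]

end Aux

/-- For p prime, k ≥ 1, m ≥ 2, the SL(m, Z_{p^k})-action on (Z_{p^k})^m has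
exactly k + 1 orbits. -/
theorem num_orbits_prime_power (m p k : ℕ) (hp : p.Prime) (hk : 1 ≤ k)
    (hm : 2 ≤ m) :
    Nat.card (Quot (fun a b : Fin m → ZMod (p ^ k) =>
        ∃ A : Matrix.SpecialLinearGroup (Fin m) (ZMod (p ^ k)),
          vecMul a (A : Matrix (Fin m) (Fin m) (ZMod (p ^ k))) = b))
      = k + 1 := by
  haveI : Fact p.Prime := ⟨hp⟩
  haveI : NeZero (p ^ k) := ⟨pow_ne_zero k hp.pos.ne'⟩
  haveI : NeZero m := ⟨by omega⟩
  show Nat.card (Quot (SLRel m p k)) = k + 1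
  set f : Fin (k + 1) → Quot (SLRel m p k) := fun j =>
    Quot.mk _ ((p : ZMod (p ^ k)) ^ (j : ℕ) • (Pi.single 0 1 : Fin m → ZMod (p ^ k))) with hf
  have hbij : Function.Bijective f := by
    constructor
    · intro j1 j2 h
      have hW := congrArg (Quot.lift (wv (p := p) (k := k) (m := m))
        (fun a b hab => wv_eq_of_rel hab)) h
      have hW' : wv ((p : ZMod (p ^ k)) ^ (j1 : ℕ) • (Pi.single 0 1 : Fin m → ZMod (p ^ k)))
          = wv ((p : ZMod (p ^ k)) ^ (j2 : ℕ) • (Pi.single 0 1 : Fin m → ZMod (p ^ k))) := hW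
      rw [wv_pow_single (Nat.lt_succ_iff.1 j1.isLt), wv_pow_single (Nat.lt_succ_iff.1 j2.isLt)]
        at hW'
      exact Fin.ext hW'
    · intro q
      induction q using Quot.ind with
      | _ a =>
        exact ⟨⟨wv a, Nat.lt_succ_of_le (wv_le a)⟩, (Quot.sound (rel_norm hm a)).symm⟩
  rw [Nat.card_congr (Equiv.ofBijective f hbij).symm, Nat.card_eq_fintype_card,
    Fintype.card_fin]
end

section
/- For m ≥ 2 and any n ≥ 2, the orbits of the SL(m, Z_n)-action on (Z_n)^m are exactly the sets O_d = {a ∈ (Z_n)^m : gcd(a, n) = d} for divisors d of n; in particular (Z_n)^m is the disjoint union over d | n of O_d. -/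
open Matrix Finset

namespace OrbitsGcdAux

variable {m n : ℕ}

/-- The orbit relation of `SL(m, ZMod n)` acting by `vecMul`. -/
def R (a b : Fin m → ZMod n) : Prop :=
  ∃ A : Matrix.SpecialLinearGroup (Fin m) (ZMod n),
    vecMul a (A : Matrix (Fin m) (Fin m) (ZMod n)) = b

lemma R_refl (a : Fin m → ZMod n) : R a a :=
  ⟨1, by rw [Matrix.SpecialLinearGroup.coe_one, Matrix.vecMul_one]⟩

lemma R_trans {a b c : Fin m → ZMod n} (h1 : R a b) (h2 : R b c) : R a c := by
  obtain ⟨A, hA⟩ := h1; obtain ⟨B, hB⟩ := h2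
  exact ⟨A * B, by rw [Matrix.SpecialLinearGroup.coe_mul, ← Matrix.vecMul_vecMul, hA, hB]⟩

lemma R_symm {a b : Fin m → ZMod n} (h : R a b) : R b a := by
  obtain ⟨A, hA⟩ := h
  refine ⟨A⁻¹, ?_⟩
  rw [← hA, Matrix.vecMul_vecMul, ← Matrix.SpecialLinearGroup.coe_mul, mul_inv_cancel,
    Matrix.SpecialLinearGroup.coe_one, Matrix.vecMul_one]

lemma vecMul_transvection (i j : Fin m) (c : ZMod n) (a : Fin m → ZMod n) :
    vecMul a (Matrix.transvection i j c) = Function.update a j (a j + a i * c) := by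
  funext k
  rw [Matrix.transvection, Matrix.vecMul_add, Matrix.vecMul_one]
  have hs : (vecMul a (Matrix.single i j c)) k = if k = j then a i * c else 0 := by
    simp only [Matrix.vecMul, dotProduct, Matrix.single, Matrix.of_apply, mul_ite,
      mul_zero]
    rw [Finset.sum_eq_single i]
    · by_cases h : k = j
      · simp [h]
      · simp [h, Ne.symm h]
    · intro b _ hb; simp [Ne.symm hb]
    · simp
  rw [Pi.add_apply, hs]
  by_cases h : k = j
  · subst h; simp
  · simp [h, Function.update_of_ne h]

/-- Elementary move: add `c` times coordinate `i` to coordinate `j`. -/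
lemma R_step (i j : Fin m) (hij : i ≠ j) (c : ZMod n) (a : Fin m → ZMod n) :
    ∃ b, R a b ∧ b j = a j + a i * c ∧ b i = a i ∧ ∀ k, k ≠ j → b k = a k := by
  refine ⟨Function.update a j (a j + a i * c),
    ⟨⟨Matrix.transvection i j c, Matrix.det_transvection_of_ne i j hij c⟩,
      vecMul_transvection i j c a⟩, by simp, by simp [hij], fun k hk => by simp [hk]⟩

lemma natCast_val_self [NeZero n] (x : ZMod n) : ((x.val : ℕ) : ZMod n) = x := by
  rw [ZMod.natCast_val, ZMod.cast_id]

/-- Reduce the pair `(a i, a j)` to `(gcd(n, a i, a j), 0)` when `a j = 0`. -/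
lemma pair_base [NeZero n] (i j : Fin m) (hij : i ≠ j) (a : Fin m → ZMod n) (haj : a j = 0) :
    ∃ b, R a b ∧ b i = ((Nat.gcd n (a i).val : ℕ) : ZMod n) ∧ b j = 0 ∧
      ∀ k, k ≠ i → k ≠ j → b k = a k := by
  set v := (a i).val with hv
  set g := Nat.gcd n v with hg
  have hgu : (g : ZMod n) = a i * ((Nat.gcdB n v : ℤ) : ZMod n) := by
    have h1 : ((g : ℤ) : ZMod n) = ((n * Nat.gcdA n v + v * Nat.gcdB n v : ℤ) : ZMod n) := by
      rw [← Nat.gcd_eq_gcd_ab n v]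
    push_cast at h1
    rw [ZMod.natCast_self, zero_mul, zero_add] at h1
    rw [h1, hv, natCast_val_self]
  obtain ⟨a1, hR1, h1j, h1i, h1k⟩ := R_step i j hij ((Nat.gcdB n v : ℤ) : ZMod n) a
  have ha1j : a1 j = (g : ZMod n) := by rw [h1j, haj, zero_add, ← hgu]
  obtain ⟨a2, hR2, h2i, h2j, h2k⟩ := R_step j i hij.symm (-((v / g : ℕ) : ZMod n)) a1
  have ha2i : a2 i = 0 := by
    rw [h2i, h1i, ha1j, mul_neg, ← Nat.cast_mul, Nat.mul_div_cancel' (Nat.gcd_dvd_right n v),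
      hv, natCast_val_self, add_neg_cancel]
  have ha2j : a2 j = (g : ZMod n) := by rw [h2j, ha1j]
  obtain ⟨a3, hR3, h3i, h3j, h3k⟩ := R_step j i hij.symm 1 a2
  have ha3i : a3 i = (g : ZMod n) := by rw [h3i, ha2i, ha2j, zero_add, mul_one]
  have ha3j : a3 j = (g : ZMod n) := by rw [h3j, ha2j]
  obtain ⟨a4, hR4, h4j, h4i, h4k⟩ := R_step i j hij (-1) a3
  refine ⟨a4, R_trans (R_trans (R_trans hR1 hR2) hR3) hR4, ?_, ?_, ?_⟩
  · rw [h4i, ha3i]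
  · rw [h4j, ha3j, ha3i, mul_neg_one, add_neg_cancel]
  · intro k hki hkj
    rw [h4k k hkj, h3k k hki, h2k k hki, h1k k hkj]

/-- Reduce any pair `(a i, a j)` to `(gcd(n, a i, a j), 0)` by the Euclidean algorithm. -/
lemma pair [NeZero n] : ∀ N : ℕ, ∀ i j : Fin m, i ≠ j → ∀ a : Fin m → ZMod n, (a j).val < N →
    ∃ b, R a b ∧ b i = ((Nat.gcd n (Nat.gcd (a i).val (a j).val) : ℕ) : ZMod n) ∧ b j = 0 ∧
      ∀ k, k ≠ i → k ≠ j → b k = a k := by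
  intro N
  induction N with
  | zero => intro i j hij a h; omega
  | succ N ih =>
    intro i j hij a haj
    by_cases h0 : (a j).val = 0
    · obtain ⟨b, hR, hbi, hbj, hbk⟩ := pair_base i j hij a ((ZMod.val_eq_zero _).mp h0)
      refine ⟨b, hR, ?_, hbj, hbk⟩
      rw [hbi, h0, Nat.gcd_zero_right]
    · set x := (a i).val with hx
      set y := (a j).val with hy
      have hypos : 0 < y := Nat.pos_of_ne_zero h0
      set q := x / y with hq
      obtain ⟨a1, hR1, h1i, h1j, h1k⟩ := R_step j i hij.symm (-((q : ℕ) : ZMod n)) a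
      have hxq : x = y * q + x % y := by rw [hq, Nat.div_add_mod]
      have hai : a i = ((x : ℕ) : ZMod n) := by rw [hx, natCast_val_self]
      have haj' : a j = ((y : ℕ) : ZMod n) := by rw [hy, natCast_val_self]
      have ha1i : a1 i = ((x % y : ℕ) : ZMod n) := by
        have h' : a1 i = ((x : ℕ) : ZMod n) + -(((y : ℕ) : ZMod n) * ((q : ℕ) : ZMod n)) := by
          rw [h1i, hai, haj']; ring
        have hc : ((x : ℕ) : ZMod n) = ((y : ℕ) : ZMod n) * ((q : ℕ) : ZMod n)
            + ((x % y : ℕ) : ZMod n) := by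
          conv_lhs => rw [hxq]
          push_cast
          ring
        rw [h', hc]
        ring
      have hval1 : (a1 i).val = x % y := by
        rw [ha1i, ZMod.val_cast_of_lt]
        calc x % y < y := Nat.mod_lt _ hypos
          _ ≤ n := le_of_lt (ZMod.val_lt (a j))
      have ha1j : a1 j = a j := h1j
      obtain ⟨c, hRc, hcj, hci, hck⟩ := ih j i hij.symm a1 (by
        rw [hval1]; have := Nat.mod_lt x hypos; omega)
      have hgcd : Nat.gcd (a1 j).val (a1 i).val = Nat.gcd x y := by
        rw [hval1, ha1j, ← hy, Nat.gcd_comm, ← Nat.gcd_rec, Nat.gcd_comm]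
      obtain ⟨d, hRd, hdi, hdj, hdk⟩ := R_step j i hij.symm 1 c
      have hdival : d i = ((Nat.gcd n (Nat.gcd x y) : ℕ) : ZMod n) := by
        rw [hdi, hci, hcj, hgcd, zero_add, mul_one]
      have hdjval : d j = ((Nat.gcd n (Nat.gcd x y) : ℕ) : ZMod n) := by
        rw [hdj, hcj, hgcd]
      obtain ⟨e, hRe, hej, hei, hek⟩ := R_step i j hij (-1) d
      refine ⟨e, R_trans (R_trans (R_trans hR1 hRc) hRd) hRe, ?_, ?_, ?_⟩
      · rw [hei, hdival]
      · rw [hej, hdjval, hdival, mul_neg_one, add_neg_cancel]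
      · intro k hki hkj
        rw [hek k hkj, hdk k hki, hck k hkj hki, h1k k hki]

lemma gcd_juggle {n B A T J : ℕ} (h : Nat.gcd n B = Nat.gcd n (Nat.gcd A T)) :
    Nat.gcd n (Nat.gcd n (Nat.gcd B J)) = Nat.gcd n (Nat.gcd A (Nat.gcd J T)) := by
  rw [← Nat.gcd_assoc n n, Nat.gcd_self, ← Nat.gcd_assoc, h, Nat.gcd_assoc, Nat.gcd_assoc,
    Nat.gcd_comm T J]

lemma fold [NeZero n] (i0 : Fin m) :
    ∀ s : Finset (Fin m), i0 ∉ s → ∀ a : Fin m → ZMod n,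
      ∃ b, R a b ∧ (∀ k ∈ s, b k = 0) ∧ (∀ k, k ∉ s → k ≠ i0 → b k = a k) ∧
        Nat.gcd n (b i0).val = Nat.gcd n (Nat.gcd (a i0).val (s.gcd fun k => (a k).val)) := by
  intro s
  induction s using Finset.induction_on with
  | empty =>
    intro _ a
    refine ⟨a, R_refl a, by simp, fun k _ _ => rfl, by simp⟩
  | @insert j t hjt ih =>
    intro hi0 a
    have hji0 : j ≠ i0 := fun h => hi0 (h ▸ Finset.mem_insert_self j t)
    have hi0t : i0 ∉ t := fun h => hi0 (Finset.mem_insert_of_mem h)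
    obtain ⟨b, hRb, hbz, hbk, hbg⟩ := ih hi0t a
    have hbj : b j = a j := hbk j hjt hji0
    obtain ⟨c, hRc, hci, hcj, hck⟩ :=
      pair ((b j).val + 1) i0 j (Ne.symm hji0) b (Nat.lt_succ_self _)
    refine ⟨c, R_trans hRb hRc, ?_, ?_, ?_⟩
    · intro k hk
      rcases Finset.mem_insert.mp hk with h | h
      · rw [h]; exact hcj
      · have hki : k ≠ i0 := fun he => hi0t (he ▸ h)
        have hkj : k ≠ j := fun he => hjt (he ▸ h)
        rw [hck k hki hkj]; exact hbz k h
    · intro k hk hki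
      have hkj : k ≠ j := fun he => hk (he ▸ Finset.mem_insert_self j t)
      have hkt : k ∉ t := fun he => hk (Finset.mem_insert_of_mem he)
      rw [hck k hki hkj]; exact hbk k hkt hki
    · set g := Nat.gcd n (Nat.gcd (b i0).val (b j).val) with hgdef
      have hgn : g ∣ n := Nat.gcd_dvd_left _ _
      have hcival : (c i0).val = g % n := by rw [hci, ZMod.val_natCast]
      rw [hcival, Nat.gcd_comm n (g % n), ← Nat.gcd_rec, hgdef, hbj, Finset.gcd_insert]
      exact gcd_juggle hbg


lemma toCanon [NeZero n] (hm : 2 ≤ m) (a : Fin m → ZMod n) :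
    R a (fun k => if k = (⟨0, by omega⟩ : Fin m)
      then ((Nat.gcd n (Finset.univ.gcd fun i => (a i).val) : ℕ) : ZMod n) else 0) := by
  have hm0 : 0 < m := by omega
  have hm1 : 1 < m := by omega
  set i0 : Fin m := ⟨0, by omega⟩ with hi0
  set j1 : Fin m := ⟨1, hm1⟩ with hj1
  have hij : i0 ≠ j1 := by simp [hi0, hj1, Fin.ext_iff]
  obtain ⟨b, hRb, hbz, _, hbg⟩ := fold i0 (Finset.univ.erase i0) (Finset.notMem_erase _ _) a
  have hGeq : Nat.gcd n (Nat.gcd (a i0).val ((Finset.univ.erase i0).gcd fun k => (a k).val))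
      = Nat.gcd n (Finset.univ.gcd fun i => (a i).val) := by
    congr 1
    conv_rhs => rw [← Finset.insert_erase (Finset.mem_univ i0), Finset.gcd_insert]
    rfl
  obtain ⟨c, hRc, hci, hcj, hck⟩ := pair ((b j1).val + 1) i0 j1 hij b (Nat.lt_succ_self _)
  have hbj1 : b j1 = 0 := hbz j1 (Finset.mem_erase.mpr ⟨Ne.symm hij, Finset.mem_univ _⟩)
  have hcval : c i0 = ((Nat.gcd n (Finset.univ.gcd fun i => (a i).val) : ℕ) : ZMod n) := by
    rw [hci, hbj1, ZMod.val_zero, Nat.gcd_zero_right, hbg, hGeq]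
  have hfun : c = fun k => if k = i0
      then ((Nat.gcd n (Finset.univ.gcd fun i => (a i).val) : ℕ) : ZMod n) else 0 := by
    funext k
    by_cases hk : k = i0
    · subst hk; rw [if_pos rfl]; exact hcval
    · rw [if_neg hk]
      by_cases hkj : k = j1
      · subst hkj; exact hcj
      · rw [hck k hk hkj]
        exact hbz k (Finset.mem_erase.mpr ⟨hk, Finset.mem_univ _⟩)
  exact hfun ▸ R_trans hRb hRc

lemma inv_dvd [NeZero n] {a b : Fin m → ZMod n} (h : R a b) :
    Nat.gcd n (Finset.univ.gcd fun i => (a i).val) ∣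
      Nat.gcd n (Finset.univ.gcd fun i => (b i).val) := by
  obtain ⟨A, hA⟩ := h
  set g := Nat.gcd n (Finset.univ.gcd fun i => (a i).val) with hg
  have hgn : g ∣ n := Nat.gcd_dvd_left _ _
  have hgpos : 0 < g := Nat.gcd_pos_of_pos_left _ (NeZero.pos n)
  haveI : NeZero g := ⟨hgpos.ne'⟩
  have hga : ∀ i, ((a i).val : ZMod g) = 0 := fun i => by
    have hdvd : g ∣ (a i).val :=
      dvd_trans (Nat.gcd_dvd_right n _) (Finset.gcd_dvd (Finset.mem_univ i))
    exact (ZMod.natCast_eq_zero_iff _ _).mpr hdvd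
  refine Nat.dvd_gcd hgn (Finset.dvd_gcd fun j _ => ?_)
  have hcast : ∀ x : ZMod n, ((x.val : ℕ) : ZMod g) = ZMod.castHom hgn (ZMod g) x := fun x => by
    rw [ZMod.castHom_apply, ZMod.natCast_val]
  have hbj : ((b j).val : ZMod g) = 0 := by
    rw [hcast, ← hA]
    have hsum : (vecMul a (A : Matrix (Fin m) (Fin m) (ZMod n))) j
        = ∑ i, a i * (A : Matrix (Fin m) (Fin m) (ZMod n)) i j := by
      simp [Matrix.vecMul, dotProduct]
    rw [hsum, map_sum]
    refine Finset.sum_eq_zero fun i _ => ?_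
    rw [_root_.map_mul, ← hcast (a i), hga i, zero_mul]
  exact (ZMod.natCast_eq_zero_iff _ _).mp hbj

end OrbitsGcdAux

/-- For m ≥ 2, n ≥ 2, the SL(m, Z_n)-orbits on (Z_n)^m are exactly the sets
O_d = {a : gcd(a, n) = d} for divisors d of n: two vectors lie in the same
orbit iff they have the same gcd with n, and gcd(a, n) always divides n. -/
theorem orbits_eq_gcd_classes (m n : ℕ) (hn : 2 ≤ n) (hm : 2 ≤ m) :
    (∀ a b : Fin m → ZMod n,
      (∃ A : Matrix.SpecialLinearGroup (Fin m) (ZMod n),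
          vecMul a (A : Matrix (Fin m) (Fin m) (ZMod n)) = b) ↔
        Nat.gcd n (Finset.univ.gcd fun i => (a i).val)
          = Nat.gcd n (Finset.univ.gcd fun i => (b i).val)) ∧
    (∀ a : Fin m → ZMod n,
      Nat.gcd n (Finset.univ.gcd fun i => (a i).val) ∣ n) := by
  haveI : NeZero n := ⟨by omega⟩
  refine ⟨fun a b => ⟨fun h => ?_, fun h => ?_⟩, fun a => Nat.gcd_dvd_left _ _⟩
  · exact Nat.dvd_antisymm (OrbitsGcdAux.inv_dvd h)
      (OrbitsGcdAux.inv_dvd (OrbitsGcdAux.R_symm h))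
  · have h1 := OrbitsGcdAux.toCanon (n := n) hm a
    have h2 := OrbitsGcdAux.toCanon (n := n) hm b
    simp only [h] at h1
    exact OrbitsGcdAux.R_trans h1 (OrbitsGcdAux.R_symm h2)
end
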